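/- Let H ∈ (0,1). The function φ(θ) = φ(cos θ, sin θ) satisfies φ(θ) / (π/4 − θ)^{2H} → 1 as θ ↑ π/4. -/

import Mathlib

open MeasureTheory Real Filter Topology

noncomputable section

/-- `φ(t,v) = t^{2H} v^{2H} − ¼(t^{2H} + v^{2H} − |t−v|^{2H})²`. -/
def phiFun (H t v : ℝ) : ℝ :=
  t ^ (2 * H) * v ^ (2 * H) - (t ^ (2 * H) + v ^ (2 * H) - |t - v| ^ (2 * H)) ^ 2 / 4

/-- For `H ∈ (0,1)`, `φ(cos θ, sin θ) / (π/4 − θ)^{2H} → 1` as `θ ↑ π/4`. -/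
theorem phi_theta_asymp_pi_div_four (H : ℝ) (hH : H ∈ Set.Ioo (0 : ℝ) 1) :
    Tendsto (fun θ : ℝ => phiFun H (Real.cos θ) (Real.sin θ) / (Real.pi / 4 - θ) ^ (2 * H))
      (𝓝[<] (Real.pi / 4)) (𝓝 1) := by
  obtain ⟨h0, h1⟩ := hH
  set p : ℝ := Real.pi / 4 with hp
  have hpi := Real.pi_pos
  have hppos : 0 < p := by positivity
  have hcosp : Real.cos p = Real.sqrt 2 / 2 := Real.cos_pi_div_four
  have hsinp : Real.sin p = Real.sqrt 2 / 2 := Real.sin_pi_div_four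
  have hsqrt2 : (0:ℝ) < Real.sqrt 2 := Real.sqrt_pos.mpr (by norm_num)
  have h2 : Real.sqrt 2 * Real.sqrt 2 = 2 := Real.mul_self_sqrt (by norm_num)
  have hc : Real.cos p ≠ 0 := by rw [hcosp]; positivity
  have hs : Real.sin p ≠ 0 := by rw [hsinp]; positivity
  set h : ℝ → ℝ := fun θ => Real.cos θ ^ (2 * H) - Real.sin θ ^ (2 * H) with hh
  have hhp : h p = 0 := by simp [hh, hcosp, hsinp]
  -- derivative of h at p
  obtain ⟨c, hd⟩ : ∃ c, HasDerivAt h c p :=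
    ⟨_, ((Real.hasDerivAt_cos p).rpow_const (Or.inl hc)).sub
        ((Real.hasDerivAt_sin p).rpow_const (Or.inl hs))⟩
  have hslope : Tendsto (slope h p) (𝓝[<] p) (𝓝 c) :=
    (hasDerivAt_iff_tendsto_slope.mp hd).mono_left
      (nhdsWithin_mono _ fun x hx => ne_of_lt hx)
  -- ε = p - θ tends to 0 from the right
  have hε : Tendsto (fun θ : ℝ => p - θ) (𝓝[<] p) (𝓝[>] (0:ℝ)) := by
    apply tendsto_nhdsWithin_of_tendsto_nhds_of_eventually_within
    · have : Tendsto (fun θ : ℝ => p - θ) (𝓝 p) (𝓝 (p - p)) :=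
        tendsto_const_nhds.sub tendsto_id
      simpa using this.mono_left nhdsWithin_le_nhds
    · filter_upwards [self_mem_nhdsWithin] with θ (hθ : θ < p)
      simpa using hθ
  -- sin x / x → 1
  have hsinc : Tendsto (fun x : ℝ => Real.sin x / x) (𝓝[≠] (0:ℝ)) (𝓝 1) := by
    have := hasDerivAt_iff_tendsto_slope.mp (Real.hasDerivAt_sin 0)
    rw [Real.cos_zero] at this
    refine this.congr fun x => ?_
    simp [slope_def_field]
  have hsinε : Tendsto (fun θ : ℝ => Real.sin (p - θ) / (p - θ)) (𝓝[<] p) (𝓝 1) :=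
    hsinc.comp (hε.mono_right (nhdsWithin_mono _ fun x hx => Set.mem_compl_singleton_iff.mpr (ne_of_gt (Set.mem_Ioi.mp hx))))
  -- the factor K θ = (√2 * (sin ε / ε))^(2H) tends to (√2)^(2H)
  have hK : Tendsto (fun θ : ℝ => (Real.sqrt 2 * (Real.sin (p - θ) / (p - θ))) ^ (2*H))
      (𝓝[<] p) (𝓝 (Real.sqrt 2 ^ (2*H))) := by
    have h1 : Tendsto (fun θ : ℝ => Real.sqrt 2 * (Real.sin (p - θ) / (p - θ)))
        (𝓝[<] p) (𝓝 (Real.sqrt 2)) := by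
      simpa using (tendsto_const_nhds.mul hsinε :)
    exact ((Real.continuousAt_rpow_const _ _ (Or.inl hsqrt2.ne')).tendsto).comp h1
  -- (a+b)/2 tends to q
  set q : ℝ := (Real.sqrt 2 / 2) ^ (2*H) with hq
  have hA : Tendsto (fun θ : ℝ => (Real.cos θ ^ (2*H) + Real.sin θ ^ (2*H)) / 2)
      (𝓝[<] p) (𝓝 q) := by
    have h1 : ContinuousAt (fun θ : ℝ => Real.cos θ ^ (2*H)) p :=
      (Real.continuousAt_rpow_const _ _ (Or.inl hc)).comp Real.continuous_cos.continuousAt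
    have h2' : ContinuousAt (fun θ : ℝ => Real.sin θ ^ (2*H)) p :=
      (Real.continuousAt_rpow_const _ _ (Or.inl hs)).comp Real.continuous_sin.continuousAt
    have := ((h1.add h2').div_const 2).tendsto.mono_left
      (nhdsWithin_le_nhds : 𝓝[<] p ≤ 𝓝 p)
    have hval : (Real.cos p ^ (2*H) + Real.sin p ^ (2*H)) / 2 = q := by
      rw [hcosp, hsinp, hq]; ring
    simp only [Pi.add_apply] at this
    rwa [hval] at this
  -- (cos θ - sin θ)^(2H) tends to 0
  have hC : Tendsto (fun θ : ℝ => (Real.cos θ - Real.sin θ) ^ (2*H)) (𝓝[<] p) (𝓝 0) := by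
    have h1 : Tendsto (fun θ : ℝ => Real.cos θ - Real.sin θ) (𝓝[<] p) (𝓝 0) := by
      have := (Real.continuous_cos.sub Real.continuous_sin).continuousAt (x := p)
      have h0' : Real.cos p - Real.sin p = 0 := by rw [hcosp, hsinp]; ring
      simpa [h0', Pi.sub_def] using this.tendsto.mono_left (nhdsWithin_le_nhds : 𝓝[<] p ≤ 𝓝 p)
    have h2' : ContinuousAt (fun x : ℝ => x ^ (2*H)) 0 :=
      Real.continuousAt_rpow_const _ _ (Or.inr (by positivity))
    have := h2'.tendsto.comp h1
    simpa [Function.comp_def, Real.zero_rpow (by positivity : (2*H) ≠ 0)] using this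
  -- ε^(2-2H) tends to 0
  have hD : Tendsto (fun θ : ℝ => (p - θ) ^ (2 - 2*H)) (𝓝[<] p) (𝓝 0) := by
    have h2' : ContinuousAt (fun x : ℝ => x ^ (2 - 2*H)) 0 :=
      Real.continuousAt_rpow_const _ _ (Or.inr (by linarith))
    have := h2'.tendsto.comp (hε.mono_right nhdsWithin_le_nhds)
    simpa [Function.comp_def, Real.zero_rpow (by linarith : (2 - 2*H) ≠ 0)] using this
  -- the combined limit
  have hG : Tendsto (fun θ : ℝ =>
      -((slope h p θ) ^ 2) * (p - θ) ^ (2 - 2*H) / 4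
      + ((Real.cos θ ^ (2*H) + Real.sin θ ^ (2*H)) / 2)
          * (Real.sqrt 2 * (Real.sin (p - θ) / (p - θ))) ^ (2*H)
      - (Real.sqrt 2 * (Real.sin (p - θ) / (p - θ))) ^ (2*H)
          * (Real.cos θ - Real.sin θ) ^ (2*H) / 4) (𝓝[<] p)
      (𝓝 (-(c ^ 2) * 0 / 4 + q * Real.sqrt 2 ^ (2*H) - Real.sqrt 2 ^ (2*H) * 0 / 4)) := by
    exact ((((hslope.pow 2).neg.mul hD).div_const 4).add (hA.mul hK)).sub
      ((hK.mul hC).div_const 4)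
  have hval : -(c ^ 2) * 0 / 4 + q * Real.sqrt 2 ^ (2*H) - Real.sqrt 2 ^ (2*H) * 0 / 4 = 1 := by
    have : q * Real.sqrt 2 ^ (2*H) = 1 := by
      rw [hq, ← Real.mul_rpow (by positivity) hsqrt2.le]
      rw [show Real.sqrt 2 / 2 * Real.sqrt 2 = 1 by
        rw [div_mul_eq_mul_div, h2]; norm_num]
      exact Real.one_rpow _
    rw [this]; ring
  rw [hval] at hG
  refine hG.congr' ?_
  filter_upwards [Ioo_mem_nhdsLT_of_mem (show p ∈ Set.Ioc 0 p from ⟨hppos, le_refl p⟩)]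
    with θ hθ
  obtain ⟨hθ0, hθp⟩ := hθ
  have hε0 : 0 < p - θ := sub_pos.mpr hθp
  have hεπ : p - θ < Real.pi := by rw [hp] at *; linarith
  have hsε : 0 < Real.sin (p - θ) := Real.sin_pos_of_pos_of_lt_pi hε0 hεπ
  have htv : Real.cos θ - Real.sin θ = Real.sqrt 2 * Real.sin (p - θ) := by
    rw [Real.sin_sub, hsinp, hcosp]
    linear_combination ((Real.sin θ - Real.cos θ) / 2) * h2
  have htvpos : 0 < Real.cos θ - Real.sin θ := by
    rw [htv]; positivity
  have hEpos : 0 < (p - θ) ^ (2*H) := Real.rpow_pos_of_pos hε0 _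
  have hdd : (Real.cos θ - Real.sin θ) ^ (2*H)
      = (Real.sqrt 2 * (Real.sin (p - θ) / (p - θ))) ^ (2*H) * (p - θ) ^ (2*H) := by
    have hx : Real.cos θ - Real.sin θ
        = (Real.sqrt 2 * (Real.sin (p - θ) / (p - θ))) * (p - θ) := by
      rw [htv]; field_simp
    rw [hx, Real.mul_rpow (by positivity) hε0.le]
  have hε2 : (p - θ) ^ (2 - 2*H) = (p - θ) ^ 2 / (p - θ) ^ (2*H) := by
    rw [eq_div_iff hEpos.ne', ← Real.rpow_add hε0]
    norm_num
  have hsl : slope h p θ = (Real.sin θ ^ (2*H) - Real.cos θ ^ (2*H)) / (p - θ) := by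
    rw [slope_def_field, hhp, sub_zero]
    simp only [hh]
    rw [div_eq_div_iff (by intro hcon; apply hε0.ne'; linarith [sub_eq_zero.mp hcon] : θ - p ≠ 0)
      hε0.ne']
    ring
  have habs : |Real.cos θ - Real.sin θ| = Real.cos θ - Real.sin θ := abs_of_pos htvpos
  show _ = phiFun H (Real.cos θ) (Real.sin θ) / (p - θ) ^ (2*H)
  rw [phiFun, habs, hdd, hsl, hε2]
  field_simp
  ring
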